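/- Multicomponent bathtub principle, Lagrange multiplier part: there exists α = (α_0,…,α_N) ∈ ℝ^{N+1} such that, setting λ(x) = min_{0 ≤ j ≤ N} (F_j(x) + α_j), every minimizer s̄ of 𝓕 over 𝒳 ∩ 𝒜 satisfies, for each i ∈ {0,…,N}, F_i(x) + α_i = λ(x) for a.e. x in the set {x ∈ Ω : s̄_i(x) > 0}. -/

import Mathlib

open MeasureTheory
open scoped ENNReal

/-- The feasible set `𝒳 ∩ 𝒜` of the multicomponent bathtub problem: vectors of
nonnegative integrable phase contents with prescribed masses `m i` whose sum
saturates the constraint `ω` almost everywhere on `Ω`. -/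
def feasible {d N : ℕ} (Ω : Set (Fin d → ℝ)) (ω : (Fin d → ℝ) → ℝ)
    (m : Fin (N + 1) → ℝ) (s : Fin (N + 1) → (Fin d → ℝ) → ℝ) : Prop :=
  (∀ i, IntegrableOn (s i) Ω) ∧
  (∀ i, ∀ᵐ x ∂(volume.restrict Ω), 0 ≤ s i x) ∧
  (∀ i, ∫ x in Ω, s i x = m i) ∧
  (∀ᵐ x ∂(volume.restrict Ω), ∑ i, s i x = ω x)

/-- The primal linear functional `𝓕(s) = Σ_i ∫_Ω F_i s_i dx`. -/
noncomputable def primalF {d N : ℕ} (Ω : Set (Fin d → ℝ))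
    (F : Fin (N + 1) → (Fin d → ℝ) → ℝ)
    (s : Fin (N + 1) → (Fin d → ℝ) → ℝ) : ℝ :=
  ∑ i, ∫ x in Ω, F i x * s i x

/-- The dual functional `J(α) = ∫_Ω (min_j (F_j + α_j)) ω dx − Σ_i α_i m_i`. -/
noncomputable def dualJ {d N : ℕ} (Ω : Set (Fin d → ℝ)) (ω : (Fin d → ℝ) → ℝ)
    (F : Fin (N + 1) → (Fin d → ℝ) → ℝ) (m : Fin (N + 1) → ℝ)
    (α : Fin (N + 1) → ℝ) : ℝ :=
  (∫ x in Ω, (⨅ j, (F j x + α j)) * ω x) - ∑ i, α i * m i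


open Filter Topology
set_option linter.unusedSectionVars false
set_option linter.unusedVariables false
set_option maxHeartbeats 2000000

section Helpers
variable {N : ℕ}

lemma fin_ciInf_le (f : Fin (N + 1) → ℝ) (i : Fin (N + 1)) : (⨅ j, f j) ≤ f i :=
  ciInf_le (Set.Finite.bddBelow (Set.finite_range f)) i

lemma fin_exists_eq_ciInf (f : Fin (N + 1) → ℝ) : ∃ i, f i = ⨅ j, f j :=
  exists_eq_ciInf_of_finite

lemma fin_le_ciInf {f : Fin (N + 1) → ℝ} {a : ℝ} (h : ∀ i, a ≤ f i) : a ≤ ⨅ j, f j :=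
  le_ciInf h

lemma fin_ciInf_lipschitz (f : Fin (N + 1) → ℝ) (α β : Fin (N + 1) → ℝ) (c : ℝ)
    (h : ∀ i, |α i - β i| ≤ c) :
    |(⨅ j, (f j + α j)) - ⨅ j, (f j + β j)| ≤ c := by
  have key : ∀ (γ δ : Fin (N + 1) → ℝ), (∀ i, |γ i - δ i| ≤ c) →
      (⨅ j, (f j + γ j)) - (⨅ j, (f j + δ j)) ≤ c := by
    intro γ δ hgd
    obtain ⟨i, hi⟩ := fin_exists_eq_ciInf (fun j => f j + δ j)
    have h1 : (⨅ j, (f j + γ j)) ≤ f i + γ i := fin_ciInf_le _ i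
    have h2 := hgd i
    rw [abs_le] at h2
    linarith [hi.symm.le]
  have h1 := key α β h
  have h2 := key β α (fun i => by rw [abs_sub_comm]; exact h i)
  rw [abs_le]; constructor <;> linarith

lemma fin_ciInf_sub_const (f : Fin (N + 1) → ℝ) (c : ℝ) :
    (⨅ j, (f j - c)) = (⨅ j, f j) - c := by
  apply le_antisymm
  · obtain ⟨i, hi⟩ := fin_exists_eq_ciInf f
    calc (⨅ j, (f j - c)) ≤ f i - c := fin_ciInf_le _ i
    _ = (⨅ j, f j) - c := by rw [hi]
  · apply fin_le_ciInf
    intro i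
    have := fin_ciInf_le f i
    linarith

end Helpers

section Bathtub
variable {X : Type*} [MeasurableSpace X] {N : ℕ}

/-- pointwise min of `G j + α j`. -/
noncomputable def lamF (G : Fin (N + 1) → X → ℝ) (α : Fin (N + 1) → ℝ) (x : X) : ℝ :=
  ⨅ j, (G j x + α j)

noncomputable def Jfun (μ : Measure X) (ω : X → ℝ) (G : Fin (N + 1) → X → ℝ)
    (m : Fin (N + 1) → ℝ) (α : Fin (N + 1) → ℝ) : ℝ :=
  (∫ x, lamF G α x * ω x ∂μ) - ∑ i, α i * m i

variable {μ : Measure X} {ω : X → ℝ} {G : Fin (N + 1) → X → ℝ} {m : Fin (N + 1) → ℝ} {C : ℝ}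

lemma lam_meas (hG : ∀ i, Measurable (G i)) (α : Fin (N + 1) → ℝ) :
    Measurable (lamF G α) :=
  Measurable.iInf (fun j => (hG j).add_const _)

lemma lam_le (α : Fin (N + 1) → ℝ) (x : X) (i : Fin (N + 1)) :
    lamF G α x ≤ G i x + α i := fin_ciInf_le _ i

lemma lam_abs_le (hC : ∀ i x, |G i x| ≤ C) (α : Fin (N + 1) → ℝ) (x : X) :
    |lamF G α x| ≤ C + ‖α‖ := by
  rw [abs_le]
  constructor
  · apply fin_le_ciInf
    intro i
    have h1 := hC i x
    have h2 : |α i| ≤ ‖α‖ := by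
      simpa [Real.norm_eq_abs] using norm_le_pi_norm α i
    rw [abs_le] at h1 h2
    linarith
  · have h0 := lam_le (G := G) α x 0
    have h1 := hC 0 x
    have h2 : |α 0| ≤ ‖α‖ := by
      simpa [Real.norm_eq_abs] using norm_le_pi_norm α 0
    rw [abs_le] at h1 h2
    linarith

lemma lam_int (hG : ∀ i, Measurable (G i)) (hC : ∀ i x, |G i x| ≤ C)
    (hωi : Integrable ω μ) (α : Fin (N + 1) → ℝ) :
    Integrable (fun x => lamF G α x * ω x) μ := by
  apply Integrable.bdd_mul (c := C + ‖α‖) hωi ((lam_meas hG α).aestronglyMeasurable)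
  exact Eventually.of_forall (fun x => by simpa [Real.norm_eq_abs] using lam_abs_le hC α x)

lemma J_lipschitz (hω0 : ∀ x, 0 ≤ ω x) (hωi : Integrable ω μ)
    (hm : ∀ i, 0 < m i) (hG : ∀ i, Measurable (G i)) (hC : ∀ i x, |G i x| ≤ C)
    (α β : Fin (N + 1) → ℝ) :
    |Jfun μ ω G m α - Jfun μ ω G m β| ≤ (dist α β) * ((∫ x, ω x ∂μ) + ∑ i, m i) := by
  have hd : ∀ i, |α i - β i| ≤ dist α β := by
    intro i
    simpa [Real.dist_eq] using dist_le_pi_dist α β i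
  have hlip : ∀ x, |lamF G α x - lamF G β x| ≤ dist α β := by
    intro x
    exact fin_ciInf_lipschitz (fun j => G j x) α β (dist α β) hd
  have hintα := lam_int hG hC hωi α
  have hintβ := lam_int hG hC hωi β
  have key1 : |(∫ x, lamF G α x * ω x ∂μ) - ∫ x, lamF G β x * ω x ∂μ|
      ≤ (dist α β) * ∫ x, ω x ∂μ := by
    rw [← integral_sub hintα hintβ]
    calc |∫ x, (lamF G α x * ω x - lamF G β x * ω x) ∂μ|
        ≤ ∫ x, |lamF G α x * ω x - lamF G β x * ω x| ∂μ := (by simpa [Real.norm_eq_abs] using norm_integral_le_integral_norm (μ := μ) (fun x => lamF G α x * ω x - lamF G β x * ω x))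
      _ ≤ ∫ x, (dist α β) * ω x ∂μ := by
          have hsub := (hintα.sub hintβ).abs
          simp only [Pi.sub_apply] at hsub
          apply integral_mono hsub (hωi.const_mul _)
          intro x
          simp only
          have heq : lamF G α x * ω x - lamF G β x * ω x = (lamF G α x - lamF G β x) * ω x := by
            ring
          rw [heq, abs_mul, abs_of_nonneg (hω0 x)]
          exact mul_le_mul_of_nonneg_right (hlip x) (hω0 x)
      _ = (dist α β) * ∫ x, ω x ∂μ := integral_const_mul _ _
  have key2 : |(∑ i, α i * m i) - ∑ i, β i * m i| ≤ (dist α β) * ∑ i, m i := by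
    rw [← Finset.sum_sub_distrib, Finset.mul_sum]
    calc |∑ i, (α i * m i - β i * m i)| ≤ ∑ i, |α i * m i - β i * m i| :=
        Finset.abs_sum_le_sum_abs _ _
      _ ≤ ∑ i, dist α β * m i := by
          apply Finset.sum_le_sum
          intro i _
          have : α i * m i - β i * m i = (α i - β i) * m i := by ring
          rw [this, abs_mul, abs_of_nonneg (hm i).le]
          exact mul_le_mul_of_nonneg_right (hd i) (hm i).le
  have : Jfun μ ω G m α - Jfun μ ω G m β =
      ((∫ x, lamF G α x * ω x ∂μ) - ∫ x, lamF G β x * ω x ∂μ)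
      - ((∑ i, α i * m i) - ∑ i, β i * m i) := by
    unfold Jfun; ring
  rw [this, mul_add]
  calc _ ≤ |(∫ x, lamF G α x * ω x ∂μ) - ∫ x, lamF G β x * ω x ∂μ|
      + |(∑ i, α i * m i) - ∑ i, β i * m i| := abs_sub _ _
    _ ≤ _ := add_le_add key1 key2

lemma J_continuous (hω0 : ∀ x, 0 ≤ ω x) (hωi : Integrable ω μ)
    (hm : ∀ i, 0 < m i) (hG : ∀ i, Measurable (G i)) (hC : ∀ i x, |G i x| ≤ C) :
    Continuous (Jfun μ ω G m) := by
  set K := (∫ x, ω x ∂μ) + ∑ i, m i with hK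
  have hK0 : 0 ≤ K := by
    have h1 : 0 ≤ ∫ x, ω x ∂μ := integral_nonneg hω0
    have h2 : 0 ≤ ∑ i, m i := Finset.sum_nonneg (fun i _ => (hm i).le)
    positivity
  apply LipschitzWith.continuous (K := Real.toNNReal K)
  apply LipschitzWith.of_dist_le_mul
  intro α β
  rw [Real.dist_eq, Real.coe_toNNReal _ hK0, mul_comm]
  exact J_lipschitz hω0 hωi hm hG hC α β

lemma J_shift (hωi : Integrable ω μ) (hG : ∀ i, Measurable (G i)) (hC : ∀ i x, |G i x| ≤ C)
    (hmass : ∑ i, m i = ∫ x, ω x ∂μ) (β : Fin (N + 1) → ℝ) (c : ℝ) :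
    Jfun μ ω G m (fun i => β i - c) = Jfun μ ω G m β := by
  have hlam : ∀ x, lamF G (fun i => β i - c) x = lamF G β x - c := by
    intro x
    unfold lamF
    calc (⨅ j, (G j x + (β j - c))) = ⨅ j, ((G j x + β j) - c) := by
          congr 1; ext j; ring
      _ = (⨅ j, (G j x + β j)) - c := fin_ciInf_sub_const _ c
  unfold Jfun
  have h1 : (∫ x, lamF G (fun i => β i - c) x * ω x ∂μ)
      = (∫ x, lamF G β x * ω x ∂μ) - c * ∫ x, ω x ∂μ := by
    rw [← integral_const_mul, ← integral_sub (lam_int hG hC hωi β) (hωi.const_mul c)]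
    apply integral_congr_ae
    filter_upwards with x
    rw [hlam x]; ring
  rw [h1]
  have h2 : ∑ i, (β i - c) * m i = (∑ i, β i * m i) - c * ∑ i, m i := by
    rw [Finset.mul_sum, ← Finset.sum_sub_distrib]
    congr 1; ext i; ring
  rw [h2, hmass]; ring

lemma exists_max (hωm : Measurable ω) (hω0 : ∀ x, 0 ≤ ω x) (hωi : Integrable ω μ)
    (hm : ∀ i, 0 < m i) (hmass : ∑ i, m i = ∫ x, ω x ∂μ)
    (hG : ∀ i, Measurable (G i)) (hC0 : 0 ≤ C) (hC : ∀ i x, |G i x| ≤ C) :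
    ∃ α, ∀ β, Jfun μ ω G m β ≤ Jfun μ ω G m α := by
  classical
  set W := ∫ x, ω x ∂μ with hW
  have hW0 : 0 ≤ W := integral_nonneg hω0
  -- minimal mass
  obtain ⟨i₀, -, hmin⟩ := Finset.exists_min_image Finset.univ m ⟨0, Finset.mem_univ 0⟩
  set mmin := m i₀ with hmm
  have hmmin : 0 < mmin := hm i₀
  set R := (C * W + |Jfun μ ω G m 0| + 1) / mmin with hR
  have hR0 : 0 < R := by
    apply div_pos _ hmmin
    positivity
  -- maximize over closed ball
  have hcomp : IsCompact (Metric.closedBall (0 : Fin (N + 1) → ℝ) R) :=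
    isCompact_closedBall _ _
  have hne : (Metric.closedBall (0 : Fin (N + 1) → ℝ) R).Nonempty :=
    ⟨0, Metric.mem_closedBall_self hR0.le⟩
  obtain ⟨α, hαmem, hαmax⟩ := hcomp.exists_isMaxOn hne
    ((J_continuous hω0 hωi hm hG hC).continuousOn)
  refine ⟨α, fun β => ?_⟩
  -- normalize β
  set c := ⨅ i, β i with hc
  set γ := fun i => β i - c with hγ
  have hγ0 : ∀ i, 0 ≤ γ i := fun i => by
    have := fin_ciInf_le β i
    simp only [hγ]; linarith
  have hJγ : Jfun μ ω G m γ = Jfun μ ω G m β := J_shift hωi hG hC hmass β c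
  have hJ0le : Jfun μ ω G m 0 ≤ Jfun μ ω G m α :=
    hαmax (Metric.mem_closedBall_self hR0.le)
  by_cases hball : γ ∈ Metric.closedBall (0 : Fin (N + 1) → ℝ) R
  · have := hαmax hball
    rw [← hJγ]
    exact this
  · -- γ is large : J γ is very small
    rw [Metric.mem_closedBall, dist_zero_right] at hball
    push_neg at hball
    have : ∃ i, R < γ i := by
      by_contra hcon
      push_neg at hcon
      have : ‖γ‖ ≤ R := by
        rw [pi_norm_le_iff_of_nonneg hR0.le]
        intro i
        rw [Real.norm_eq_abs, abs_of_nonneg (hγ0 i)]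
        exact hcon i
      linarith
    obtain ⟨i₁, hi₁⟩ := this
    -- some coordinate of γ is 0
    obtain ⟨i₂, hi₂⟩ := fin_exists_eq_ciInf β
    have hγi₂ : γ i₂ = 0 := by simp only [hγ]; rw [hi₂, hc]; exact sub_self _
    -- J γ ≤ C * W - R * mmin
    have hlamle : ∀ x, lamF G γ x ≤ C := by
      intro x
      calc lamF G γ x ≤ G i₂ x + γ i₂ := lam_le γ x i₂
        _ = G i₂ x := by rw [hγi₂]; ring
        _ ≤ C := (abs_le.mp (hC i₂ x)).2
    have hint1 : (∫ x, lamF G γ x * ω x ∂μ) ≤ C * W := by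
      rw [hW, ← integral_const_mul]
      apply integral_mono (lam_int hG hC hωi γ) (hωi.const_mul C)
      intro x
      exact mul_le_mul_of_nonneg_right (hlamle x) (hω0 x)
    have hsum : R * mmin ≤ ∑ i, γ i * m i := by
      calc R * mmin ≤ γ i₁ * m i₁ := by
            apply mul_le_mul hi₁.le (hmin i₁ (Finset.mem_univ i₁)) hmmin.le
            linarith
        _ ≤ ∑ i, γ i * m i := by
            apply Finset.single_le_sum (f := fun i => γ i * m i) _ (Finset.mem_univ i₁)
            intro i _
            exact mul_nonneg (hγ0 i) (hm i).le
    have hJgle : Jfun μ ω G m γ ≤ C * W - R * mmin := by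
      unfold Jfun
      have := hint1
      linarith
    have hRbig : C * W - R * mmin = -(|Jfun μ ω G m 0| + 1) := by
      rw [hR]
      field_simp
      ring
    rw [← hJγ]
    apply le_of_lt
    calc Jfun μ ω G m γ ≤ C * W - R * mmin := hJgle
      _ = -(|Jfun μ ω G m 0| + 1) := hRbig
      _ < Jfun μ ω G m 0 := by
          have h1 := abs_nonneg (Jfun μ ω G m 0)
          have h2 := neg_abs_le (Jfun μ ω G m 0)
          linarith
      _ ≤ Jfun μ ω G m α := hJ0le

lemma hall_condition (hω0 : ∀ x, 0 ≤ ω x) (hωi : Integrable ω μ)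
    (hG : ∀ i, Measurable (G i)) (hC : ∀ i x, |G i x| ≤ C)
    {α : Fin (N + 1) → ℝ} (hmax : ∀ β, Jfun μ ω G m β ≤ Jfun μ ω G m α)
    (S : Finset (Fin (N + 1))) (hS : S.Nonempty) :
    ∑ i ∈ S, m i ≤ ∫ x in {x | ∃ i ∈ S, G i x + α i = lamF G α x}, ω x ∂μ := by
  classical
  set U : Set X := {x | ∃ i ∈ S, G i x + α i = lamF G α x} with hU
  have hUmeas : MeasurableSet U := by
    have : U = ⋃ i ∈ S, {x | G i x + α i = lamF G α x} := by
      ext x; simp [hU, Set.mem_iUnion]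
    rw [this]
    apply MeasurableSet.biUnion S.countable_toSet
    intro i _
    exact measurableSet_eq_fun ((hG i).add_const _) (lam_meas hG α)
  set t : ℕ → ℝ := fun n => 1 / (n + 1) with ht
  have ht0 : ∀ n, 0 < t n := fun n => by positivity
  set αn : ℕ → Fin (N + 1) → ℝ :=
    fun n i => α i - t n * (if i ∈ S then 1 else 0) with hαn
  set φ : ℕ → X → ℝ := fun n x => (n + 1) * (lamF G α x - lamF G (αn n) x) with hφ
  -- pointwise facts
  have fac_a : ∀ n x, lamF G (αn n) x ≤ lamF G α x := by
    intro n x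
    obtain ⟨j, hj⟩ := fin_exists_eq_ciInf (fun j => G j x + α j)
    calc lamF G (αn n) x ≤ G j x + αn n j := lam_le _ x j
      _ ≤ G j x + α j := by
          simp only [hαn]
          have : 0 ≤ t n * (if j ∈ S then 1 else 0) := by positivity
          linarith
      _ = lamF G α x := hj
  have fac_b : ∀ n x, lamF G α x - lamF G (αn n) x ≤ t n := by
    intro n x
    obtain ⟨j, hj⟩ := fin_exists_eq_ciInf (fun j => G j x + αn n j)
    have h1 : lamF G α x ≤ G j x + α j := lam_le _ x j
    have h2 : G j x + αn n j = lamF G (αn n) x := hj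
    have h3 : α j - αn n j ≤ t n := by
      simp only [hαn]
      by_cases hjS : j ∈ S
      · simp [hjS]
      · simp [hjS]
        exact (ht0 n).le
    linarith
  have fac_c : ∀ n x, x ∈ U → φ n x = 1 := by
    intro n x hx
    obtain ⟨i, hiS, hieq⟩ := hx
    have h1 : lamF G (αn n) x ≤ lamF G α x - t n := by
      calc lamF G (αn n) x ≤ G i x + αn n i := lam_le _ x i
        _ = G i x + α i - t n := by simp only [hαn, hiS, if_pos, mul_one]; ring
        _ = lamF G α x - t n := by rw [hieq]
    have h2 := fac_b n x
    have h3 : lamF G α x - lamF G (αn n) x = t n := le_antisymm h2 (by linarith)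
    simp only [hφ, h3, ht]
    field_simp
  have fac_d : ∀ x, x ∉ U → ∀ᶠ n in atTop, φ n x = 0 := by
    intro x hx
    set g := (S.inf' hS (fun i => G i x + α i)) - lamF G α x with hg
    have hgpos : 0 < g := by
      rw [hg, sub_pos, Finset.lt_inf'_iff]
      intro i hiS
      rcases lt_or_eq_of_le (lam_le (G := G) α x i) with h | h
      · exact h
      · exact absurd ⟨i, hiS, h.symm⟩ hx
    obtain ⟨n0, hn0⟩ := exists_nat_one_div_lt hgpos
    rw [eventually_atTop]
    refine ⟨n0, fun n hn => ?_⟩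
    have htn : t n < g := by
      calc t n = 1 / (n + 1) := rfl
        _ ≤ 1 / (n0 + 1) := by
            apply one_div_le_one_div_of_le (by positivity)
            exact_mod_cast Nat.succ_le_succ hn
        _ < g := hn0
    have heq : lamF G (αn n) x = lamF G α x := by
      apply le_antisymm (fac_a n x)
      apply fin_le_ciInf
      intro j
      by_cases hjS : j ∈ S
      · have h1 : S.inf' hS (fun i => G i x + α i) ≤ G j x + α j :=
          Finset.inf'_le _ hjS
        simp only [hαn, hjS, if_pos, mul_one]
        rw [hg] at htn
        linarith
      · simp only [hαn, hjS, if_neg, not_false_iff, mul_zero, sub_zero]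
        exact lam_le α x j
    simp [hφ, heq]
  have φbound : ∀ n x, |φ n x| ≤ 1 := by
    intro n x
    rw [abs_le]
    constructor
    · have h1 := fac_a n x
      have : (0:ℝ) ≤ (n+1) * (lamF G α x - lamF G (αn n) x) := by
        apply mul_nonneg (by positivity)
        linarith
      simp only [hφ]; linarith
    · have h2 := fac_b n x
      have : (n+1:ℝ) * (lamF G α x - lamF G (αn n) x) ≤ (n+1) * t n := by
        apply mul_le_mul_of_nonneg_left h2 (by positivity)
      have htn1 : (n+1:ℝ) * t n = 1 := by rw [ht]; field_simp
      simp only [hφ]; linarith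
  -- dominated convergence
  have hDCT : Tendsto (fun n => ∫ x, φ n x * ω x ∂μ) atTop
      (𝓝 (∫ x, U.indicator (fun _ => (1:ℝ)) x * ω x ∂μ)) := by
    apply tendsto_integral_of_dominated_convergence ω
    · intro n
      apply AEStronglyMeasurable.mul _ hωi.aestronglyMeasurable
      apply Measurable.aestronglyMeasurable
      exact (((lam_meas hG α).sub (lam_meas hG (αn n))).const_mul _)
    · exact hωi
    · intro n
      filter_upwards with x
      rw [Real.norm_eq_abs, abs_mul, abs_of_nonneg (hω0 x)]
      calc |φ n x| * ω x ≤ 1 * ω x :=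
          mul_le_mul_of_nonneg_right (φbound n x) (hω0 x)
        _ = ω x := one_mul _
    · filter_upwards with x
      by_cases hx : x ∈ U
      · have : ∀ n, φ n x * ω x = ω x := fun n => by rw [fac_c n x hx, one_mul]
        simp only [this, Set.indicator_of_mem hx, one_mul]
        exact tendsto_const_nhds
      · have hev : ∀ᶠ n in atTop, φ n x * ω x = 0 := by
          filter_upwards [fac_d x hx] with n hn
          rw [hn, zero_mul]
        simp only [Set.indicator_of_notMem hx, zero_mul]
        exact Tendsto.congr' (hev.mono fun n hn => hn.symm) tendsto_const_nhds
  have hlimit : (∫ x, U.indicator (fun _ => (1:ℝ)) x * ω x ∂μ) = ∫ x in U, ω x ∂μ := by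
    rw [← integral_indicator hUmeas]
    apply integral_congr_ae
    filter_upwards with x
    by_cases hx : x ∈ U
    · simp [Set.indicator_of_mem hx]
    · simp [Set.indicator_of_notMem hx]
  -- optimality inequality for each n
  have hopt : ∀ n, ∑ i ∈ S, m i ≤ ∫ x, φ n x * ω x ∂μ := by
    intro n
    have hJ := hmax (αn n)
    unfold Jfun at hJ
    have hsum : ∑ i, αn n i * m i = (∑ i, α i * m i) - t n * ∑ i ∈ S, m i := by
      have h1 : ∀ i : Fin (N + 1), αn n i * m i
          = α i * m i - (if i ∈ S then t n * m i else 0) := by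
        intro i
        simp only [hαn]
        by_cases hiS : i ∈ S <;> simp [hiS] <;> ring
      rw [Finset.sum_congr rfl (fun i _ => h1 i), Finset.sum_sub_distrib]
      congr 1
      rw [Finset.sum_ite_mem, Finset.univ_inter, Finset.mul_sum]
    have hintd : (∫ x, (lamF G α x - lamF G (αn n) x) * ω x ∂μ)
        = (∫ x, lamF G α x * ω x ∂μ) - ∫ x, lamF G (αn n) x * ω x ∂μ := by
      rw [← integral_sub (lam_int hG hC hωi α) (lam_int hG hC hωi (αn n))]
      apply integral_congr_ae
      filter_upwards with x
      ring
    rw [hsum] at hJ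
    have step1 : t n * ∑ i ∈ S, m i ≤ ∫ x, (lamF G α x - lamF G (αn n) x) * ω x ∂μ := by
      rw [hintd]
      linarith
    calc ∑ i ∈ S, m i = (n + 1) * (t n * ∑ i ∈ S, m i) := by
          rw [ht]; field_simp
      _ ≤ (n + 1) * ∫ x, (lamF G α x - lamF G (αn n) x) * ω x ∂μ :=
          mul_le_mul_of_nonneg_left step1 (by positivity)
      _ = ∫ x, φ n x * ω x ∂μ := by
          rw [← integral_const_mul]
          apply integral_congr_ae
          filter_upwards with x
          simp only [hφ]
          ring
  exact ge_of_tendsto (hlimit ▸ hDCT) (Eventually.of_forall hopt)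

lemma sum_delta_mul {b c : Fin (N + 1)} (W : Fin (N + 1) → ℝ) :
    ∑ i, ((if i = b then (1:ℝ) else 0) - (if i = c then 1 else 0)) * W i = W b - W c := by
  simp [sub_mul, ite_mul, Finset.sum_sub_distrib]

lemma bathtub_main (hωm : Measurable ω) (hω0 : ∀ x, 0 ≤ ω x) (hωi : Integrable ω μ)
    (hm : ∀ i, 0 < m i) (hmass : ∑ i, m i = ∫ x, ω x ∂μ)
    (hG : ∀ i, Measurable (G i)) (hC0 : 0 ≤ C) (hC : ∀ i x, |G i x| ≤ C) :
    ∃ α : Fin (N + 1) → ℝ,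
      ∀ sb : Fin (N + 1) → X → ℝ,
        (∀ i, Measurable (sb i)) → (∀ i, Integrable (sb i) μ) →
        (∀ i x, 0 ≤ sb i x) → (∀ i, ∫ x, sb i x ∂μ = m i) →
        (∀ᵐ x ∂μ, ∑ i, sb i x = ω x) →
        (∀ s : Fin (N + 1) → X → ℝ, (∀ i, Integrable (s i) μ) →
          (∀ i, ∀ᵐ x ∂μ, 0 ≤ s i x) → (∀ i, ∫ x, s i x ∂μ = m i) →
          (∀ᵐ x ∂μ, ∑ i, s i x = ω x) →
          ∑ i, ∫ x, G i x * sb i x ∂μ ≤ ∑ i, ∫ x, G i x * s i x ∂μ) →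
        ∀ i₀, ∀ᵐ x ∂μ, 0 < sb i₀ x → G i₀ x + α i₀ = lamF G α x := by
  classical
  obtain ⟨α, hαmax⟩ := exists_max hωm hω0 hωi hm hmass hG hC0 hC
  refine ⟨α, ?_⟩
  intro sb hsbm hsbi hsb0 hsbmass hsbsum hmin i₀
  by_contra hcon
  set E : Fin (N + 1) → Set X := fun i => {x | G i x + α i = lamF G α x} with hE
  have hEmeas : ∀ i, MeasurableSet (E i) := fun i =>
    measurableSet_eq_fun ((hG i).add_const _) (lam_meas hG α)
  set edge : Fin (N + 1) → Fin (N + 1) → Prop :=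
    fun i k => 0 < ∫ x in E i, sb k x ∂μ with hedge
  set RF : Finset (Fin (N + 1)) :=
    Finset.univ.filter (fun k => Relation.ReflTransGen edge i₀ k) with hRF
  have hi₀R : i₀ ∈ RF := by
    rw [hRF, Finset.mem_filter]
    exact ⟨Finset.mem_univ _, Relation.ReflTransGen.refl⟩
  set U : Set X := ⋃ i ∈ RF, E i with hU
  have hUmeas : MeasurableSet U :=
    MeasurableSet.biUnion RF.countable_toSet (fun i _ => hEmeas i)
  have hGmul : ∀ (i : Fin (N + 1)) (f : X → ℝ), Integrable f μ →
      Integrable (fun x => G i x * f x) μ := by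
    intro i f hf
    exact Integrable.bdd_mul (c := C) hf (hG i).aestronglyMeasurable
      (Eventually.of_forall (fun x => by rw [Real.norm_eq_abs]; exact hC i x))
  -- transfer schemes ---------------------------------------------------------
  set P : ℝ → Fin (N + 1) → Prop := fun κ k =>
    ∃ (ε θ : ℝ) (u : Fin (N + 1) → X → ℝ), 0 < ε ∧ 0 < θ ∧ θ ≤ 1 ∧
      (∀ i, Integrable (u i) μ) ∧
      (∀ x, ∑ i, u i x = 0) ∧
      (∀ i, ∫ x, u i x ∂μ =
        ε * ((if i = i₀ then 1 else 0) - (if i = k then 1 else 0))) ∧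
      (∀ i x, θ * sb i x ≤ sb i x + u i x) ∧
      (∑ i, ∫ x, G i x * u i x ∂μ ≤ ε * κ) with hP
  have hstep : ∀ (κ : ℝ) (b c : Fin (N + 1)) (D : Set X) (K : ℝ),
      P κ b → MeasurableSet D → (0 < ∫ x in D, sb c x ∂μ) →
      (∀ x ∈ D, G b x - G c x ≤ K) → P (κ + K) c := by
    intro κ b c D K hPb hD hDpos hDK
    obtain ⟨ε, θ, u, hε, hθ0, hθ1, huint, husum, humass, humargin, hucost⟩ := hPb
    set M := ∫ x in D, sb c x ∂μ with hM
    set w : X → ℝ := D.indicator (sb c) with hw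
    have hw0 : ∀ x, 0 ≤ w x := fun x => Set.indicator_nonneg (fun y _ => hsb0 c y) x
    have hwle : ∀ x, w x ≤ sb c x :=
      fun x => Set.indicator_le_self' (fun y _ => hsb0 c y) x
    have hwint : Integrable w μ := (hsbi c).integrableOn.integrable_indicator hD
    have hwInt : ∫ x, w x ∂μ = M := by rw [hw, integral_indicator hD]
    set ε' := min ε (θ / 2 * M) with hε'
    have hε'0 : 0 < ε' := lt_min hε (by positivity)
    set r := ε' / ε with hr
    have hr0 : 0 < r := div_pos hε'0 hε
    have hr1 : r ≤ 1 := by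
      rw [hr, div_le_one hε]; exact min_le_left _ _
    set q := ε' / M with hq
    have hq0 : 0 < q := div_pos hε'0 hDpos
    have hqθ : q ≤ θ / 2 := by
      rw [hq, div_le_iff₀ hDpos]; exact min_le_right _ _
    have hrε : r * ε = ε' := div_mul_cancel₀ _ (ne_of_gt hε)
    have hqM : q * M = ε' := div_mul_cancel₀ _ (ne_of_gt hDpos)
    set u' : Fin (N + 1) → X → ℝ := fun i x =>
      r * u i x + (q * ((if i = b then 1 else 0) - (if i = c then 1 else 0))) * w x
      with hu'
    have hu'int : ∀ i, Integrable (u' i) μ := by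
      intro i
      exact ((huint i).const_mul r).add (hwint.const_mul _)
    refine ⟨ε', θ / 2, u', hε'0, by positivity, by linarith, hu'int, ?_, ?_, ?_, ?_⟩
    · intro x
      simp only [hu']
      rw [Finset.sum_add_distrib, ← Finset.mul_sum, husum x, mul_zero, zero_add]
      rw [← Finset.sum_mul]
      have h0 : ∑ i, (q * ((if i = b then (1:ℝ) else 0) - (if i = c then 1 else 0))) = 0 := by
        rw [← Finset.mul_sum]
        simp [Finset.sum_sub_distrib]
      rw [h0, zero_mul]
    · intro i
      simp only [hu']
      rw [integral_add ((huint i).const_mul r) (hwint.const_mul _),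
        integral_const_mul, integral_const_mul, humass i, hwInt]
      have hA : ∀ A : ℝ, r * (ε * A) = A * ε' := by
        intro A; rw [← hrε]; ring
      have hB : ∀ B : ℝ, q * B * M = B * ε' := by
        intro B; rw [← hqM]; ring
      rw [hA, hB]
      by_cases hib : i = b <;> by_cases hic : i = c <;> by_cases hii : i = i₀ <;>
        simp [hib, hic, hii] <;> ring
    · intro i x
      have h2 := hsb0 i x
      have hbase : θ * sb i x ≤ sb i x + r * u i x := by
        have h1 := humargin i x
        have h3 : r * (θ * sb i x) ≤ r * (sb i x + u i x) :=
          mul_le_mul_of_nonneg_left h1 hr0.le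
        nlinarith [mul_nonneg (sub_nonneg.mpr hr1) (mul_nonneg (sub_nonneg.mpr hθ1) h2)]
      have hterm : -(q * sb i x) ≤
          (q * ((if i = b then (1:ℝ) else 0) - (if i = c then 1 else 0))) * w x := by
        by_cases hic : i = c
        · have e2 : (if i = c then (1:ℝ) else 0) = 1 := if_pos hic
          by_cases hib : i = b
          · have e1 : (if i = b then (1:ℝ) else 0) = 1 := if_pos hib
            rw [e1, e2]
            have e3 : (q * ((1:ℝ) - 1)) * w x = 0 := by ring
            rw [e3]
            have h4 : 0 ≤ q * sb i x := mul_nonneg hq0.le h2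
            linarith
          · have e1 : (if i = b then (1:ℝ) else 0) = 0 := if_neg hib
            rw [e1, e2]
            have h5 : w x ≤ sb i x := by rw [hic]; exact hwle x
            have h6 : q * w x ≤ q * sb i x := mul_le_mul_of_nonneg_left h5 hq0.le
            have e3 : (q * ((0:ℝ) - 1)) * w x = -(q * w x) := by ring
            rw [e3]
            linarith
        · have hcoef : 0 ≤ q * ((if i = b then (1:ℝ) else 0) - (if i = c then 1 else 0)) := by
            apply mul_nonneg hq0.le
            rw [if_neg hic]
            by_cases hib : i = b <;> simp [hib]
          have h3 : 0 ≤ (q * ((if i = b then (1:ℝ) else 0) - (if i = c then 1 else 0))) * w x :=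
            mul_nonneg hcoef (hw0 x)
          have h4 : 0 ≤ q * sb i x := mul_nonneg hq0.le h2
          linarith
      have hqsb : q * sb i x ≤ θ / 2 * sb i x :=
        mul_le_mul_of_nonneg_right hqθ h2
      simp only [hu']
      linarith
    · -- cost bound
      set W : Fin (N + 1) → ℝ := fun i => ∫ x, G i x * w x ∂μ with hW
      have hsplit : ∀ i, ∫ x, G i x * u' i x ∂μ
          = r * (∫ x, G i x * u i x ∂μ)
            + (q * ((if i = b then (1:ℝ) else 0) - (if i = c then 1 else 0))) * W i := by
        intro i
        rw [hW, ← integral_const_mul, ← integral_const_mul,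
          ← integral_add ((hGmul i (u i) (huint i)).const_mul r)
            ((hGmul i w hwint).const_mul _)]
        apply integral_congr_ae
        filter_upwards with x
        simp only [hu']
        ring
      have hsum2 : ∑ i, ∫ x, G i x * u' i x ∂μ
          = r * (∑ i, ∫ x, G i x * u i x ∂μ) + q * (W b - W c) := by
        rw [Finset.sum_congr rfl (fun i _ => hsplit i), Finset.sum_add_distrib,
          ← Finset.mul_sum]
        congr 1
        calc ∑ i, (q * ((if i = b then (1:ℝ) else 0) - (if i = c then 1 else 0))) * W i
            = q * ∑ i, ((if i = b then (1:ℝ) else 0) - (if i = c then 1 else 0)) * W i := by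
              rw [Finset.mul_sum]
              apply Finset.sum_congr rfl
              intro i _
              ring
          _ = q * (W b - W c) := by rw [sum_delta_mul]
      have hWbc : W b - W c ≤ K * M := by
        have h1 : W b - W c = ∫ x, (G b x - G c x) * w x ∂μ := by
          rw [hW, ← integral_sub (hGmul b w hwint) (hGmul c w hwint)]
          apply integral_congr_ae
          filter_upwards with x
          ring
        rw [h1]
        have h2 : Integrable (fun x => (G b x - G c x) * w x) μ := by
          apply Integrable.bdd_mul (c := 2 * C) hwint (((hG b).sub (hG c)).aestronglyMeasurable)
          refine Eventually.of_forall (fun x => ?_)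
          rw [Real.norm_eq_abs]
          calc |G b x - G c x| ≤ |G b x| + |G c x| := abs_sub _ _
            _ ≤ 2 * C := by linarith [hC b x, hC c x]
        have hmono : ∫ x, (G b x - G c x) * w x ∂μ ≤ ∫ x, K * w x ∂μ := by
          apply integral_mono h2 (hwint.const_mul K)
          intro x
          by_cases hx : x ∈ D
          · exact mul_le_mul_of_nonneg_right (hDK x hx) (hw0 x)
          · have hwx : w x = 0 := Set.indicator_of_notMem hx _
            simp only [hwx, mul_zero, le_refl]
        calc ∫ x, (G b x - G c x) * w x ∂μ ≤ ∫ x, K * w x ∂μ := hmono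
          _ = K * M := by rw [integral_const_mul, hwInt]
      calc ∑ i, ∫ x, G i x * u' i x ∂μ
          = r * (∑ i, ∫ x, G i x * u i x ∂μ) + q * (W b - W c) := hsum2
        _ ≤ r * (ε * κ) + q * (K * M) := by
            apply add_le_add
            · exact mul_le_mul_of_nonneg_left hucost hr0.le
            · exact mul_le_mul_of_nonneg_left hWbc hq0.le
        _ = ε' * (κ + K) := by
            have h3 : q * (K * M) = K * (q * M) := by ring
            rw [h3, hqM, ← hrε]
            ring
  -- base case and reachability
  have hPbase : P 0 i₀ := by
    refine ⟨1, 1, fun _ _ => 0, one_pos, one_pos, le_refl 1, ?_, ?_, ?_, ?_, ?_⟩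
    · intro i
      exact integrable_zero _ _ _
    · intro x
      simp
    · intro i
      simp
    · intro i x
      simp [hsb0 i x]
    · simp
  have hreach : ∀ k, Relation.ReflTransGen edge i₀ k → P (α k - α i₀) k := by
    intro k hk
    induction hk with
    | refl =>
        have h0 : α i₀ - α i₀ = 0 := by ring
        rw [h0]
        exact hPbase
    | @tail b c hab hbc ih =>
        have hstep' := hstep (α b - α i₀) b c (E b) (α c - α b) ih (hEmeas b) hbc ?_
        · have h0 : α b - α i₀ + (α c - α b) = α c - α i₀ := by ring
          rwa [h0] at hstep'
        · intro x hx
          have h1 : G b x + α b = lamF G α x := hx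
          have h2 : lamF G α x ≤ G c x + α c := lam_le α x c
          linarith
  -- the support lemma : reachable phases live on U
  have hzeroU : ∀ k, k ∉ RF → ∀ᵐ x ∂μ, x ∈ U → sb k x = 0 := by
    intro k hk
    have hek : ∀ i ∈ RF, ∀ᵐ x ∂μ, x ∈ E i → sb k x = 0 := by
      intro i hi
      have hnotedge : ¬ edge i k := by
        intro he
        apply hk
        rw [hRF, Finset.mem_filter]
        exact ⟨Finset.mem_univ _, ((Finset.mem_filter.mp hi).2).tail he⟩
      have h0 : ∫ x in E i, sb k x ∂μ = 0 := by
        have h1 : ¬ (0 < ∫ x in E i, sb k x ∂μ) := hnotedge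
        have h2 : 0 ≤ ∫ x in E i, sb k x ∂μ :=
          setIntegral_nonneg (hEmeas i) (fun x _ => hsb0 k x)
        push_neg at h1
        linarith
      have h3 := (setIntegral_eq_zero_iff_of_nonneg_ae
        (Eventually.of_forall (fun x => hsb0 k x)) (hsbi k).integrableOn).mp h0
      have h4 := (ae_restrict_iff' (hEmeas i)).mp h3
      filter_upwards [h4] with x hx hxE
      exact hx hxE
    have hall : ∀ᵐ x ∂μ, ∀ i ∈ RF, (x ∈ E i → sb k x = 0) :=
      (ae_ball_iff RF.countable_toSet).mpr hek
    filter_upwards [hall] with x hx hxU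
    have : ∃ i ∈ RF, x ∈ E i := by
      simpa [hU, Set.mem_iUnion] using hxU
    obtain ⟨i, hiRF, hxi⟩ := this
    exact hx i hiRF hxi
  have hUint_eq : ∫ x in U, ω x ∂μ = ∑ k ∈ RF, ∫ x in U, sb k x ∂μ := by
    have h1 : ∫ x in U, ω x ∂μ = ∑ k, ∫ x in U, sb k x ∂μ := by
      rw [← integral_finset_sum _ (fun k _ => (hsbi k).integrableOn)]
      apply integral_congr_ae
      filter_upwards [ae_restrict_of_ae hsbsum] with x hx
      exact hx.symm
    rw [h1]
    symm
    apply Finset.sum_subset (Finset.subset_univ RF)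
    intro k _ hk
    have h2 : ∀ᵐ x ∂μ.restrict U, sb k x = 0 :=
      (ae_restrict_iff' hUmeas).mpr (hzeroU k hk)
    calc ∫ x in U, sb k x ∂μ = ∫ _x in U, (0:ℝ) ∂μ := integral_congr_ae h2
      _ = 0 := by simp
  have hhall : ∑ k ∈ RF, m k ≤ ∫ x in U, ω x ∂μ := by
    have h := hall_condition hω0 hωi hG hC hαmax RF ⟨i₀, hi₀R⟩
    have hUeq : {x | ∃ i ∈ RF, G i x + α i = lamF G α x} = U := by
      ext x
      simp [hU, hE, Set.mem_iUnion]
    rwa [hUeq] at h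
  have hle : ∀ k, ∫ x in U, sb k x ∂μ ≤ m k := by
    intro k
    rw [← hsbmass k]
    exact setIntegral_le_integral (hsbi k) (Eventually.of_forall (hsb0 k))
  have heqU : ∀ k ∈ RF, ∫ x in U, sb k x ∂μ = m k := by
    by_contra hcon2
    push_neg at hcon2
    obtain ⟨k0, hk0RF, hk0⟩ := hcon2
    have hstrict : ∑ k ∈ RF, ∫ x in U, sb k x ∂μ < ∑ k ∈ RF, m k :=
      Finset.sum_lt_sum (fun k _ => hle k) ⟨k0, hk0RF, lt_of_le_of_ne (hle k0) hk0⟩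
    rw [← hUint_eq] at hstrict
    linarith
  have hsupp : ∀ k ∈ RF, ∀ᵐ x ∂μ, x ∉ U → sb k x = 0 := by
    intro k hk
    have h1 : ∫ x in Uᶜ, sb k x ∂μ = 0 := by
      have h2 := integral_add_compl hUmeas (hsbi k)
        (f := sb k)
      rw [heqU k hk, hsbmass k] at h2
      linarith
    have h3 := (setIntegral_eq_zero_iff_of_nonneg_ae
      (Eventually.of_forall (fun x => hsb0 k x)) (hsbi k).integrableOn).mp h1
    have h4 := (ae_restrict_iff' hUmeas.compl).mp h3
    filter_upwards [h4] with x hx hxU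
    exact hx hxU
  -- the bad set
  set Bad : ℕ → Set X := fun n =>
    {x | 1/((n:ℝ)+1) ≤ sb i₀ x ∧ 1/((n:ℝ)+1) ≤ G i₀ x + α i₀ - lamF G α x} with hBad
  have hBadmeas : ∀ n, MeasurableSet (Bad n) := by
    intro n
    apply MeasurableSet.inter
    · exact measurableSet_le measurable_const (hsbm i₀)
    · exact measurableSet_le measurable_const (((hG i₀).add_const _).sub (lam_meas hG α))
  have hcover : {x | ¬(0 < sb i₀ x → G i₀ x + α i₀ = lamF G α x)} ⊆ ⋃ n, Bad n := by
    intro x hx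
    rw [Set.mem_setOf_eq, Classical.not_imp] at hx
    obtain ⟨h1, h2⟩ := hx
    have h3 : 0 < G i₀ x + α i₀ - lamF G α x := by
      rcases lt_or_eq_of_le (lam_le (G := G) α x i₀) with h | h
      · linarith
      · exact absurd h.symm h2
    have h4 : 0 < min (sb i₀ x) (G i₀ x + α i₀ - lamF G α x) := lt_min h1 h3
    obtain ⟨n, hn⟩ := exists_nat_one_div_lt h4
    apply Set.mem_iUnion.mpr
    refine ⟨n, ?_, ?_⟩
    · exact le_of_lt (lt_of_lt_of_le hn (min_le_left _ _))
    · exact le_of_lt (lt_of_lt_of_le hn (min_le_right _ _))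
  have hpos : ∃ n, μ (Bad n) ≠ 0 := by
    by_contra h
    push_neg at h
    have h5 : μ {x | ¬(0 < sb i₀ x → G i₀ x + α i₀ = lamF G α x)} = 0 :=
      measure_mono_null hcover (measure_iUnion_null h)
    exact hcon (ae_iff.mpr h5)
  obtain ⟨n, hn⟩ := hpos
  set δ := 1/((n:ℝ)+1) with hδ
  have hδ0 : 0 < δ := by positivity
  set B := Bad n with hBdef
  have hBmeas : MeasurableSet B := hBadmeas n
  have hBfin : μ B < ⊤ := by
    apply lt_of_le_of_lt (measure_mono (fun x hx => hx.1))
    exact (hsbi i₀).measure_ge_lt_top hδ0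
  have hBpos : 0 < ∫ x in B, sb i₀ x ∂μ := by
    have h1 : δ * (μ B).toReal ≤ ∫ x in B, sb i₀ x ∂μ :=
      setIntegral_ge_of_const_le_real hBmeas hBfin.ne (fun x hx => hx.1)
        (hsbi i₀).integrableOn
    have h2 : 0 < (μ B).toReal := ENNReal.toReal_pos hn hBfin.ne
    nlinarith
  have hBUpos : 0 < ∫ x in B ∩ U, sb i₀ x ∂μ := by
    have hsplit2 := integral_inter_add_diff (s := B) (f := sb i₀) hUmeas
      (hsbi i₀).integrableOn
    have hzero : ∫ x in B \ U, sb i₀ x ∂μ = 0 := by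
      have h2 : ∀ᵐ x ∂μ.restrict (B \ U), sb i₀ x = 0 := by
        rw [ae_restrict_iff' (hBmeas.diff hUmeas)]
        filter_upwards [hsupp i₀ hi₀R] with x hx hxBU
        exact hx hxBU.2
      calc ∫ x in B \ U, sb i₀ x ∂μ = ∫ _x in B \ U, (0:ℝ) ∂μ := integral_congr_ae h2
        _ = 0 := by simp
    rw [hzero, add_zero] at hsplit2
    rw [hsplit2]
    exact hBpos
  have histar : ∃ i' ∈ RF, 0 < ∫ x in B ∩ E i', sb i₀ x ∂μ := by
    by_contra hcon3
    push_neg at hcon3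
    have hz : ∀ i' ∈ RF, ∀ᵐ x ∂μ, x ∈ B ∩ E i' → sb i₀ x = 0 := by
      intro i' hi'
      have h1 : ∫ x in B ∩ E i', sb i₀ x ∂μ = 0 :=
        le_antisymm (hcon3 i' hi')
          (setIntegral_nonneg (hBmeas.inter (hEmeas i')) (fun x _ => hsb0 i₀ x))
      have h2 := (setIntegral_eq_zero_iff_of_nonneg_ae
        (Eventually.of_forall (fun x => hsb0 i₀ x)) (hsbi i₀).integrableOn).mp h1
      have h3 := (ae_restrict_iff' (hBmeas.inter (hEmeas i'))).mp h2
      filter_upwards [h3] with x hx hmem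
      exact hx hmem
    have hzall : ∀ᵐ x ∂μ, ∀ i' ∈ RF, (x ∈ B ∩ E i' → sb i₀ x = 0) :=
      (ae_ball_iff RF.countable_toSet).mpr hz
    have h4 : ∀ᵐ x ∂μ.restrict (B ∩ U), sb i₀ x = 0 := by
      rw [ae_restrict_iff' (hBmeas.inter hUmeas)]
      filter_upwards [hzall] with x hx hmem
      obtain ⟨hxB, hxU⟩ := hmem
      have : ∃ i' ∈ RF, x ∈ E i' := by
        simpa [hU, Set.mem_iUnion] using hxU
      obtain ⟨i', hi', hxi'⟩ := this
      exact hx i' hi' ⟨hxB, hxi'⟩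
    have h5 : ∫ x in B ∩ U, sb i₀ x ∂μ = 0 := by
      calc ∫ x in B ∩ U, sb i₀ x ∂μ = ∫ _x in B ∩ U, (0:ℝ) ∂μ := integral_congr_ae h4
        _ = 0 := by simp
    linarith
  obtain ⟨i', hi'RF, hi'pos⟩ := histar
  -- final improving perturbation
  have hPfinal : P ((α i' - α i₀) + (α i₀ - α i' - δ)) i₀ := by
    apply hstep (α i' - α i₀) i' i₀ (B ∩ E i') (α i₀ - α i' - δ)
      (hreach i' (Finset.mem_filter.mp hi'RF).2) (hBmeas.inter (hEmeas i')) hi'pos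
    intro x hx
    have h1 : G i' x + α i' = lamF G α x := hx.2
    have h2 : δ ≤ G i₀ x + α i₀ - lamF G α x := hx.1.2
    linarith
  have hκ : (α i' - α i₀) + (α i₀ - α i' - δ) = -δ := by ring
  rw [hκ] at hPfinal
  obtain ⟨ε, θ, u, hε, hθ0, hθ1, huint, husum, humass, humargin, hucost⟩ := hPfinal
  set s' : Fin (N + 1) → X → ℝ := fun i x => sb i x + u i x with hs'
  have h1 : ∀ i, Integrable (s' i) μ := fun i => (hsbi i).add (huint i)
  have h2 : ∀ i, ∀ᵐ x ∂μ, 0 ≤ s' i x := by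
    intro i
    filter_upwards with x
    have h3 := humargin i x
    have h0 := hsb0 i x
    have h4 : 0 ≤ θ * sb i x := mul_nonneg hθ0.le h0
    simp only [hs']
    linarith
  have h3 : ∀ i, ∫ x, s' i x ∂μ = m i := by
    intro i
    simp only [hs']
    rw [integral_add (hsbi i) (huint i), hsbmass i, humass i]
    simp
  have h4 : ∀ᵐ x ∂μ, ∑ i, s' i x = ω x := by
    filter_upwards [hsbsum] with x hx
    simp only [hs']
    rw [Finset.sum_add_distrib, husum x, add_zero]
    exact hx
  have h5 := hmin s' h1 h2 h3 h4
  have h6 : ∑ i, ∫ x, G i x * s' i x ∂μ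
      = (∑ i, ∫ x, G i x * sb i x ∂μ) + ∑ i, ∫ x, G i x * u i x ∂μ := by
    rw [← Finset.sum_add_distrib]
    apply Finset.sum_congr rfl
    intro i _
    rw [← integral_add (hGmul i _ (hsbi i)) (hGmul i _ (huint i))]
    apply integral_congr_ae
    filter_upwards with x
    simp only [hs']
    ring
  have h7 : 0 < ε * δ := mul_pos hε hδ0
  rw [h6] at h5
  have h8 : ε * (-δ) = -(ε * δ) := by ring
  rw [h8] at hucost
  linarith
end Bathtub


theorem stmt_11 {d N : ℕ}
    (Ω : Set (Fin d → ℝ)) (hΩ : MeasurableSet Ω)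
    (ω : (Fin d → ℝ) → ℝ) (hωint : IntegrableOn ω Ω)
    (hω0 : ∀ᵐ x ∂(volume.restrict Ω), 0 ≤ ω x)
    (m : Fin (N + 1) → ℝ) (hm : ∀ i, 0 < m i)
    (hmass : ∑ i, m i = ∫ x in Ω, ω x)
    (F : Fin (N + 1) → (Fin d → ℝ) → ℝ)
    (hFmeas : ∀ i, AEStronglyMeasurable (F i) (volume.restrict Ω))
    (hFbdd : ∃ C : ℝ, ∀ i, ∀ᵐ x ∂(volume.restrict Ω), |F i x| ≤ C) :
    ∃ α : Fin (N + 1) → ℝ,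
      ∀ sb : Fin (N + 1) → (Fin d → ℝ) → ℝ,
        feasible Ω ω m sb →
        (∀ s, feasible Ω ω m s → primalF Ω F sb ≤ primalF Ω F s) →
        ∀ i, ∀ᵐ x ∂(volume.restrict Ω),
          0 < sb i x → F i x + α i = ⨅ j, (F j x + α j) := by
  classical
  obtain ⟨C₀, hC₀⟩ := hFbdd
  set μ := volume.restrict Ω with hμ
  set C := max C₀ 0 with hCdef
  have hC0 : 0 ≤ C := le_max_right _ _
  -- measurable truncated representatives of F
  set G : Fin (N + 1) → (Fin d → ℝ) → ℝ :=
    fun i x => max (-C) (min C ((hFmeas i).mk (F i) x)) with hGdef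
  have hGmeas : ∀ i, Measurable (G i) := by
    intro i
    exact Measurable.max measurable_const
      (measurable_const.min (hFmeas i).stronglyMeasurable_mk.measurable)
  have hGbdd : ∀ i x, |G i x| ≤ C := by
    intro i x
    rw [abs_le]
    constructor
    · exact neg_le_neg_iff.mpr le_rfl |>.trans (le_max_left _ _)
    · apply max_le (by linarith) (min_le_left _ _)
  have hGF : ∀ i, G i =ᵐ[μ] F i := by
    intro i
    filter_upwards [(hFmeas i).ae_eq_mk, hC₀ i] with x h1 h2
    have h3 : |F i x| ≤ C := le_trans h2 (le_max_left _ _)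
    rw [abs_le] at h3
    simp only [hGdef, ← h1]
    rw [min_eq_right h3.2, max_eq_right h3.1]
  -- measurable nonnegative representative of ω
  set W : (Fin d → ℝ) → ℝ := fun x => max 0 (hωint.1.mk ω x) with hWdef
  have hWmeas : Measurable W :=
    measurable_const.max hωint.1.stronglyMeasurable_mk.measurable
  have hW0 : ∀ x, 0 ≤ W x := fun x => le_max_left _ _
  have hWω : W =ᵐ[μ] ω := by
    filter_upwards [hωint.1.ae_eq_mk, hω0] with x h1 h2
    simp only [hWdef, ← h1]
    exact max_eq_right h2
  have hWint : Integrable W μ := hωint.congr hWω.symm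
  have hWmass : ∑ i, m i = ∫ x, W x ∂μ := by
    rw [hmass]
    exact (integral_congr_ae hWω).symm
  -- main result
  obtain ⟨α, hα⟩ := bathtub_main (μ := μ) (ω := W) (G := G) (m := m) (C := C)
    hWmeas hW0 hWint hm hWmass hGmeas hC0 hGbdd
  refine ⟨α, ?_⟩
  rintro sb ⟨hsbint, hsb0, hsbmass, hsbsum⟩ hminim i
  -- measurable nonnegative representatives of sb
  set sc : Fin (N + 1) → (Fin d → ℝ) → ℝ :=
    fun i x => max 0 ((hsbint i).1.mk (sb i) x) with hscdef
  have hscmeas : ∀ i, Measurable (sc i) := fun i =>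
    measurable_const.max (hsbint i).1.stronglyMeasurable_mk.measurable
  have hsceq : ∀ i, sc i =ᵐ[μ] sb i := by
    intro i
    filter_upwards [(hsbint i).1.ae_eq_mk, hsb0 i] with x h1 h2
    simp only [hscdef, ← h1]
    exact max_eq_right h2
  have hscint : ∀ i, Integrable (sc i) μ := fun i => (hsbint i).congr (hsceq i).symm
  have hsc0 : ∀ i x, 0 ≤ sc i x := fun i x => le_max_left _ _
  have hscmass : ∀ i, ∫ x, sc i x ∂μ = m i := by
    intro i
    rw [integral_congr_ae (hsceq i)]
    exact hsbmass i
  have hscsum : ∀ᵐ x ∂μ, ∑ j, sc j x = W x := by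
    have hall : ∀ᵐ x ∂μ, ∀ j, sc j x = sb j x := ae_all_iff.mpr hsceq
    filter_upwards [hall, hsbsum, hWω] with x h1 h2 h3
    rw [Finset.sum_congr rfl (fun j _ => h1 j), h2, h3]
  have hscmin : ∀ s : Fin (N + 1) → (Fin d → ℝ) → ℝ, (∀ j, Integrable (s j) μ) →
      (∀ j, ∀ᵐ x ∂μ, 0 ≤ s j x) → (∀ j, ∫ x, s j x ∂μ = m j) →
      (∀ᵐ x ∂μ, ∑ j, s j x = W x) →
      ∑ j, ∫ x, G j x * sc j x ∂μ ≤ ∑ j, ∫ x, G j x * s j x ∂μ := by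
    intro s hsint hs0 hsmass hssum
    have hfeas : feasible Ω ω m s := by
      refine ⟨hsint, hs0, hsmass, ?_⟩
      filter_upwards [hssum, hWω] with x h1 h2
      rw [h1, ← h2]
    have hp := hminim s hfeas
    unfold primalF at hp
    have e1 : ∀ j, ∫ x in Ω, F j x * sb j x = ∫ x, G j x * sc j x ∂μ := by
      intro j
      apply integral_congr_ae
      filter_upwards [hGF j, hsceq j] with x h1 h2
      rw [h1, h2]
    have e2 : ∀ j, ∫ x in Ω, F j x * s j x = ∫ x, G j x * s j x ∂μ := by
      intro j
      apply integral_congr_ae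
      filter_upwards [hGF j] with x h1
      rw [h1]
    calc ∑ j, ∫ x, G j x * sc j x ∂μ = ∑ j, ∫ x in Ω, F j x * sb j x :=
        (Finset.sum_congr rfl (fun j _ => (e1 j).symm))
      _ ≤ ∑ j, ∫ x in Ω, F j x * s j x := hp
      _ = ∑ j, ∫ x, G j x * s j x ∂μ := Finset.sum_congr rfl (fun j _ => e2 j)
  have hconc := hα sc hscmeas hscint hsc0 hscmass hscsum hscmin i
  have hGall : ∀ᵐ x ∂μ, ∀ j, G j x = F j x := ae_all_iff.mpr hGF
  filter_upwards [hconc, hGall, hsceq i] with x h1 h2 h3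
  intro hpos
  have h4 : 0 < sc i x := by rw [h3]; exact hpos
  have h5 := h1 h4
  have h6 : lamF G α x = ⨅ j, (F j x + α j) := by
    unfold lamF
    congr 1
    funext j
    rw [h2 j]
  rw [← h2 i, h5, h6]
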